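/- Let Ω be a metric space, X̄ ⊆ Ω a closed subset, r : Ω → X̄ a continuous retraction (r(x) = x for x ∈ X̄), O ⊆ Ω open, and let s : X̄ → E, σ : O → E be continuous maps into a metric space E with σ = s on X̄ ∩ O. Define O' = { u ∈ O : d_E( σ(u), s(r(u)) ) < dist(u, X̄ \ O) }. Then O' is open, X̄ ∩ O' = X̄ ∩ O, and for every sequence (uₙ) in O' converging to a point x ∈ X̄ \ O, one has σ(uₙ) → s(x); consequently the glued map s∨σ|_{O'} is continuous on X̄ ∪ O'. -/

import Mathlib

open scoped Classical

open Filter Topology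

theorem shrunken_open_set_glueing
    {Ω E : Type*} [MetricSpace Ω] [MetricSpace E]
    (Xbar O : Set Ω) (hXbar : IsClosed Xbar) (hO : IsOpen O)
    (hne : (Xbar \ O).Nonempty)
    (r : Ω → Ω) (hr : Continuous r) (hrX : ∀ x, r x ∈ Xbar)
    (hrid : ∀ x ∈ Xbar, r x = x)
    (s σ : Ω → E) (hs : ContinuousOn s Xbar) (hσ : ContinuousOn σ O)
    (hagree : ∀ x ∈ Xbar ∩ O, σ x = s x) :
    IsOpen {u | u ∈ O ∧ dist (σ u) (s (r u)) < Metric.infDist u (Xbar \ O)} ∧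
    Xbar ∩ {u | u ∈ O ∧ dist (σ u) (s (r u)) < Metric.infDist u (Xbar \ O)}
      = Xbar ∩ O ∧
    (∀ (u : ℕ → Ω),
      (∀ n, u n ∈ O ∧ dist (σ (u n)) (s (r (u n))) < Metric.infDist (u n) (Xbar \ O)) →
      ∀ x ∈ Xbar \ O, Tendsto u atTop (𝓝 x) →
        Tendsto (fun n => σ (u n)) atTop (𝓝 (s x))) ∧
    ContinuousOn (fun x => if x ∈ Xbar then s x else σ x)
      (Xbar ∪ {u | u ∈ O ∧ dist (σ u) (s (r u)) < Metric.infDist u (Xbar \ O)}) := by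
  set O' := {u | u ∈ O ∧ dist (σ u) (s (r u)) < Metric.infDist u (Xbar \ O)} with hO'def
  have hclosed : IsClosed (Xbar \ O) := hXbar.sdiff hO
  have hg : Continuous (fun x => s (r x)) := hs.comp_continuous hr hrX
  -- openness
  have hopen : IsOpen O' := by
    have hcont : ContinuousOn
        (fun u => dist (σ u) (s (r u)) - Metric.infDist u (Xbar \ O)) O :=
      (continuous_dist.comp_continuousOn (hσ.prodMk hg.continuousOn)).sub
        ((Metric.continuous_infDist_pt (Xbar \ O)).continuousOn)
    have : O' = O ∩ (fun u => dist (σ u) (s (r u)) - Metric.infDist u (Xbar \ O)) ⁻¹'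
        Set.Iio 0 := by
      ext u
      simp only [hO'def, Set.mem_setOf_eq, Set.mem_inter_iff, Set.mem_preimage,
        Set.mem_Iio, sub_neg]
    rw [this]
    exact hcont.isOpen_inter_preimage hO isOpen_Iio
  -- equality
  have heq : Xbar ∩ O' = Xbar ∩ O := by
    ext x
    constructor
    · rintro ⟨hx, hxO, -⟩
      exact ⟨hx, hxO⟩
    · rintro ⟨hx, hxO⟩
      refine ⟨hx, hxO, ?_⟩
      have h1 : σ x = s (r x) := by rw [hrid x hx]; exact hagree x ⟨hx, hxO⟩
      rw [h1, dist_self]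
      exact (hclosed.notMem_iff_infDist_pos hne).mp (fun h => h.2 hxO)
  -- sequences
  have hseq : ∀ (u : ℕ → Ω), (∀ n, u n ∈ O' ) →
      ∀ x ∈ Xbar \ O, Tendsto u atTop (𝓝 x) →
        Tendsto (fun n => σ (u n)) atTop (𝓝 (s x)) := by
    intro u hu x hx hux
    rw [tendsto_iff_dist_tendsto_zero]
    have hb : ∀ n, dist (σ (u n)) (s x) ≤ dist (u n) x + dist (s (r (u n))) (s x) := by
      intro n
      calc dist (σ (u n)) (s x)
          ≤ dist (σ (u n)) (s (r (u n))) + dist (s (r (u n))) (s x) := dist_triangle _ _ _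
        _ ≤ dist (u n) x + dist (s (r (u n))) (s x) := by
            have h1 := (hu n).2
            have h2 : Metric.infDist (u n) (Xbar \ O) ≤ dist (u n) x :=
              Metric.infDist_le_dist_of_mem hx
            linarith
    have h1 : Tendsto (fun n => dist (u n) x) atTop (𝓝 0) :=
      tendsto_iff_dist_tendsto_zero.mp hux
    have h2 : Tendsto (fun n => dist (s (r (u n))) (s x)) atTop (𝓝 0) := by
      have : Tendsto (fun n => s (r (u n))) atTop (𝓝 (s (r x))) :=
        (hg.tendsto x).comp hux
      rw [hrid x hx.1] at this
      exact tendsto_iff_dist_tendsto_zero.mp this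
    have := h1.add h2
    rw [add_zero] at this
    exact squeeze_zero (fun n => dist_nonneg) hb this
  refine ⟨hopen, heq, hseq, ?_⟩
  -- continuity of glued map
  set f : Ω → E := fun x => if x ∈ Xbar then s x else σ x with hf
  intro a ha
  by_cases haO' : a ∈ O'
  · -- near a, f = σ
    have hfa : ∀ x ∈ O', f x = σ x := by
      intro x hx
      by_cases hxX : x ∈ Xbar
      · simp only [hf, if_pos hxX]
        exact (hagree x ⟨hxX, hx.1⟩).symm
      · simp [hf, if_neg hxX]
    have : ContinuousAt σ a := hσ.continuousAt (hO.mem_nhds haO'.1)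
    have hca : ContinuousAt f a := by
      apply this.congr
      filter_upwards [hopen.mem_nhds haO'] with x hx using (hfa x hx).symm
    exact hca.continuousWithinAt
  · have haX : a ∈ Xbar := ha.resolve_right haO'
    have haO : a ∉ O := by
      intro h
      exact haO' (heq ▸ (Set.mem_inter haX h : a ∈ Xbar ∩ O)).2
    have haXO : a ∈ Xbar \ O := ⟨haX, haO⟩
    rw [Metric.continuousWithinAt_iff]
    intro ε hε
    obtain ⟨δ₁, hδ₁, hδ₁'⟩ := Metric.continuousAt_iff.mp (hg.continuousAt (x := a)) (ε / 2)
      (by linarith)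
    refine ⟨min δ₁ (ε / 2), lt_min hδ₁ (by linarith), ?_⟩
    intro x hx hxd
    have hfa : f a = s (r a) := by simp [hf, if_pos haX, hrid a haX]
    have key : dist (f x) (s (r x)) ≤ dist x a := by
      rcases hx with hxX | hxO'
      · simp [hf, if_pos hxX, hrid x hxX, dist_nonneg]
      · by_cases hxX : x ∈ Xbar
        · simp [hf, if_pos hxX, hrid x hxX, dist_nonneg]
        · simp only [hf, if_neg hxX]
          have := hxO'.2
          have h2 : Metric.infDist x (Xbar \ O) ≤ dist x a :=
            Metric.infDist_le_dist_of_mem haXO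
          linarith
    have h3 : dist (s (r x)) (s (r a)) < ε / 2 := hδ₁' (lt_of_lt_of_le hxd (min_le_left _ _))
    calc dist (f x) (f a) ≤ dist (f x) (s (r x)) + dist (s (r x)) (f a) := dist_triangle _ _ _
      _ = dist (f x) (s (r x)) + dist (s (r x)) (s (r a)) := by rw [hfa]
      _ < dist x a + ε / 2 := by linarith
      _ < ε := by
          have : dist x a < ε / 2 := lt_of_lt_of_le hxd (min_le_right _ _)
          linarith
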